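/- arXiv:2207.09806 — 4 statements merged into one kernel-verified Lean document; each statement's English description precedes it below -/
import Mathlib

section
/- Let n and k be integers with 1 ≤ k < n, and set s = ⌊(n-1)/k⌋ - 1. If s ≥ 1, then there exists an (s,k)-clash-free permutation of Z_n, i.e., a permutation π of Z_n such that for all distinct i, j ∈ Z_n with ||i,j||_n < s we have ||π(i),π(j)||_n ≥ k. -/
/-- Circular distance on `ZMod n`: the distance between `i` and `j` when the
elements of `ZMod n` are written in a cycle. -/
def circDist (n : ℕ) (i j : ZMod n) : ℕ := min (i - j).val (j - i).val

/-- A permutation `π` of `ZMod n` is `(s,k)`-clash-free if there is no pair of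
distinct elements at circular distance `< s` mapped to a pair at circular
distance `< k`. -/
def IsClashFree (n s k : ℕ) (π : Equiv.Perm (ZMod n)) : Prop :=
  ∀ i j : ZMod n, i ≠ j → circDist n i j < s → k ≤ circDist n (π i) (π j)

namespace ClashAux

lemma divmod_unique {L c d x : ℕ} (hL : 0 < L) (hd : d < L) (hx : x = L * c + d) :
    x / L = c ∧ x % L = d := by
  subst hx
  refine ⟨?_, ?_⟩
  · rw [Nat.mul_add_div hL, Nat.div_eq_of_lt hd, Nat.add_zero]
  · rw [Nat.mul_add_mod, Nat.mod_eq_of_lt hd]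

/-- The basic map: `v = t*L + i ↦ a*i + (g - 1 - t)` (mod `n`). -/
def F (n a g L : ℕ) (v : ZMod n) : ZMod n :=
  ((a * (v.val % L) + (g - 1 - v.val / L) : ℕ) : ZMod n)

lemma F_inj {n a g L : ℕ} [NeZero n] (hg : 0 < g) (hL : 0 < L) (hgL : g * L = n)
    (hga : g ∣ a) (hcop : Nat.Coprime (a / g) (n / g)) :
    Function.Injective (F n a g L) := by
  intro v w h
  have hvlt : v.val < n := ZMod.val_lt v
  have hwlt : w.val < n := ZMod.val_lt w
  have hViv : L * (v.val / L) + v.val % L = v.val := Nat.div_add_mod _ _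
  have hWiw : L * (w.val / L) + w.val % L = w.val := Nat.div_add_mod _ _
  have hivL : v.val % L < L := Nat.mod_lt _ hL
  have hiwL : w.val % L < L := Nat.mod_lt _ hL
  have htv : v.val / L < g := (Nat.div_lt_iff_lt_mul hL).mpr (by rw [hgL]; exact hvlt)
  have htw : w.val / L < g := (Nat.div_lt_iff_lt_mul hL).mpr (by rw [hgL]; exact hwlt)
  set tv := v.val / L with htvdef
  set iv := v.val % L with hivdef
  set tw := w.val / L with htwdef
  set iw := w.val % L with hiwdef
  have hFv : F n a g L v = ((a * iv + (g - 1 - tv) : ℕ) : ZMod n) := rfl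
  have hFw : F n a g L w = ((a * iw + (g - 1 - tw) : ℕ) : ZMod n) := rfl
  rw [hFv, hFw] at h
  clear_value tv iv tw iw
  clear hFv hFw htvdef hivdef htwdef hiwdef
  have hmod : a * iv + (g - 1 - tv) ≡ a * iw + (g - 1 - tw) [MOD n] :=
    (ZMod.natCast_eq_natCast_iff _ _ _).mp h
  have hdvd := hmod.dvd
  have e1 : ((a * iv + (g - 1 - tv) : ℕ) : ℤ) = (a : ℤ) * iv + ((g : ℤ) - 1 - tv) := by
    rw [Nat.cast_add, Nat.cast_mul]
    congr 1
    rw [Nat.sub_sub, Nat.cast_sub (by omega : 1 + tv ≤ g)]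
    push_cast
    ring
  have e2 : ((a * iw + (g - 1 - tw) : ℕ) : ℤ) = (a : ℤ) * iw + ((g : ℤ) - 1 - tw) := by
    rw [Nat.cast_add, Nat.cast_mul]
    congr 1
    rw [Nat.sub_sub, Nat.cast_sub (by omega : 1 + tw ≤ g)]
    push_cast
    ring
  rw [e1, e2] at hdvd
  have hgnZ : (g : ℤ) ∣ (n : ℤ) := Int.natCast_dvd_natCast.mpr ⟨L, hgL.symm⟩
  have hgaZ : (g : ℤ) ∣ (a : ℤ) := Int.natCast_dvd_natCast.mpr hga
  have hgd : (g : ℤ) ∣ ((tv : ℤ) - tw) := by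
    have h2 : (g : ℤ) ∣ ((a : ℤ) * iw + ((g : ℤ) - 1 - tw) - ((a : ℤ) * iv + ((g : ℤ) - 1 - tv))) :=
      dvd_trans hgnZ hdvd
    have h3 : ((a : ℤ) * iw + ((g : ℤ) - 1 - tw) - ((a : ℤ) * iv + ((g : ℤ) - 1 - tv)))
        = (a : ℤ) * ((iw : ℤ) - iv) + ((tv : ℤ) - tw) := by ring
    rw [h3] at h2
    exact (dvd_add_right (hgaZ.mul_right _)).mp h2
  have htveq : (tv : ℤ) - tw = 0 :=
    Int.eq_zero_of_dvd_of_natAbs_lt_natAbs hgd (by omega)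
  have htveq' : tv = tw := by omega
  obtain ⟨A, hA⟩ := hga
  have hdvd2 : (n : ℤ) ∣ (a : ℤ) * ((iw : ℤ) - iv) := by
    have h4 : (a : ℤ) * iw + ((g : ℤ) - 1 - tw) - ((a : ℤ) * iv + ((g : ℤ) - 1 - tv))
        = (a : ℤ) * ((iw : ℤ) - iv) := by rw [htveq']; ring
    rwa [h4] at hdvd
  have hLdvd : (L : ℤ) ∣ (A : ℤ) * ((iw : ℤ) - iv) := by
    obtain ⟨c, hc⟩ := hdvd2
    refine ⟨c, ?_⟩
    have hgne : (g : ℤ) ≠ 0 := by exact_mod_cast hg.ne'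
    apply mul_left_cancel₀ hgne
    calc (g : ℤ) * ((A : ℤ) * ((iw : ℤ) - iv)) = (a : ℤ) * ((iw : ℤ) - iv) := by
          rw [hA]; push_cast; ring
      _ = (n : ℤ) * c := hc
      _ = (g : ℤ) * ((L : ℤ) * c) := by rw [← hgL]; push_cast; ring
  have hAL : Nat.Coprime A L := by
    have h5 : a / g = A := by rw [hA, Nat.mul_div_cancel_left _ hg]
    have h6 : n / g = L := by rw [← hgL, Nat.mul_div_cancel_left _ hg]
    rwa [h5, h6] at hcop
  have hLA : IsCoprime (L : ℤ) (A : ℤ) := Nat.isCoprime_iff_coprime.mpr hAL.symm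
  have hLiv : (L : ℤ) ∣ ((iw : ℤ) - iv) := hLA.dvd_of_dvd_mul_left hLdvd
  have hiveq0 : (iw : ℤ) - iv = 0 :=
    Int.eq_zero_of_dvd_of_natAbs_lt_natAbs hLiv (by omega)
  have hiveq : iv = iw := by omega
  have hval : v.val = w.val := by rw [← hViv, ← hWiw, htveq', hiveq]
  exact ZMod.natCast_rightInverse.injective hval

lemma val_bounds {n s : ℕ} [NeZero n] (x y : ZMod n) (E : ℕ)
    (hkey : y = x + (E : ZMod n)) (h1 : s ≤ E) (h2 : E + s ≤ n) (hs1 : 1 ≤ s) :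
    s ≤ min (x - y).val (y - x).val := by
  have hEn : E < n := by omega
  have hyx : y - x = (E : ZMod n) := by rw [hkey]; ring
  have hv1 : (y - x).val = E := by rw [hyx, ZMod.val_natCast, Nat.mod_eq_of_lt hEn]
  have hxy : x - y = ((n - E : ℕ) : ZMod n) := by
    rw [hkey, Nat.cast_sub hEn.le, ZMod.natCast_self, zero_sub]
    ring
  have hv2 : (x - y).val = n - E := by
    rw [hxy, ZMod.val_natCast, Nat.mod_eq_of_lt (by omega)]
  omega

lemma spread {n a g L k s : ℕ} [NeZero n] (hg : 0 < g) (hL : 0 < L) (hgL : g * L = n)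
    (hga : g ∣ a) (hsa : s + 1 = a) (hs1 : 1 ≤ s) (hak : a * k < n)
    (hgk : g ≤ n - a * k) (hkL : k < L)
    (v w : ZMod n) (hne : v ≠ w) (hd : (w - v).val < k) :
    s ≤ min (F n a g L v - F n a g L w).val (F n a g L w - F n a g L v).val := by
  set δ := (w - v).val with hδdef
  have hδn : δ < n := ZMod.val_lt _
  have hδ1 : 1 ≤ δ := by
    rcases Nat.eq_zero_or_pos δ with h0 | h; swap
    · exact h
    exfalso
    apply hne
    have h1 : w - v = 0 := (ZMod.val_eq_zero _).mp h0
    exact (sub_eq_zero.mp h1).symm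
  have hk2 : 2 ≤ k := by omega
  have ha2 : 2 ≤ a := by omega
  have hw : w = v + ((δ : ℕ) : ZMod n) := by
    have h1 : ((δ : ℕ) : ZMod n) = w - v := ZMod.natCast_rightInverse (w - v)
    rw [h1]; ring
  have hWval : w.val = (v.val + δ) % n := by
    rw [hw, ZMod.val_add, ZMod.val_natCast, Nat.mod_eq_of_lt hδn]
  have hvlt : v.val < n := ZMod.val_lt v
  have hViv : L * (v.val / L) + v.val % L = v.val := Nat.div_add_mod _ _
  have hivL : v.val % L < L := Nat.mod_lt _ hL
  have htvg : v.val / L < g := (Nat.div_lt_iff_lt_mul hL).mpr (by rw [hgL]; exact hvlt)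
  set V := v.val with hVdef
  set tv := V / L with htvdef
  set iv := V % L with hivdef
  have hFv : F n a g L v = ((a * iv + (g - 1 - tv) : ℕ) : ZMod n) := rfl
  clear_value tv iv
  clear htvdef hivdef
  clear_value V
  clear_value δ
  clear hVdef hδdef
  -- product facts
  have hm1 : a * 1 ≤ a * δ := Nat.mul_le_mul le_rfl hδ1
  have hm1' : a * 1 = a := Nat.mul_one a
  have hm2 : a * δ ≤ a * (k - 1) := Nat.mul_le_mul le_rfl (by omega)
  have hm3 : a * (k - 1) + a = a * k := by
    rw [← Nat.mul_succ]
    congr 1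
    omega
  have hauL : ((a * L : ℕ) : ZMod n) = 0 := by
    obtain ⟨A, hA⟩ := hga
    have h1 : a * L = A * n := by rw [hA, ← hgL]; ring
    rw [h1]
    push_cast [ZMod.natCast_self]
    ring
  by_cases hcyc : V + δ < n
  · have hWv : w.val = V + δ := by rw [hWval, Nat.mod_eq_of_lt hcyc]
    by_cases hrow : iv + δ < L
    · -- Case A : same block
      have hdm : (V + δ) / L = tv ∧ (V + δ) % L = iv + δ := by
        refine divmod_unique hL hrow ?_
        rw [← hViv]
        ring
      have hFw : F n a g L w = ((a * (iv + δ) + (g - 1 - tv) : ℕ) : ZMod n) := by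
        simp only [F, hWv, hdm.1, hdm.2]
      have hkey : F n a g L w = F n a g L v + ((a * δ : ℕ) : ZMod n) := by
        rw [hFw, hFv, ← Nat.cast_add]
        congr 1
        have e2 : a * (iv + δ) = a * iv + a * δ := Nat.mul_add a iv δ
        omega
      exact val_bounds _ _ (a * δ) hkey (by omega) (by omega) hs1
    · -- Case B : next block
      push_neg at hrow
      have hx : V + δ = L * (tv + 1) + (iv + δ - L) := by
        have h1 : L + (iv + δ - L) = iv + δ := Nat.add_sub_cancel' hrow
        calc V + δ = L * tv + (iv + δ) := by rw [← hViv]; ring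
          _ = L * tv + (L + (iv + δ - L)) := by rw [h1]
          _ = L * (tv + 1) + (iv + δ - L) := by ring
      have hdm := divmod_unique hL (show iv + δ - L < L by omega) hx
      have htv1 : tv + 1 < g := by
        have h2 : (V + δ) / L < g :=
          (Nat.div_lt_iff_lt_mul hL).mpr (by rw [hgL]; exact hcyc)
        rwa [hdm.1] at h2
      have hFw : F n a g L w = ((a * (iv + δ - L) + (g - 1 - (tv + 1)) : ℕ) : ZMod n) := by
        simp only [F, hWv, hdm.1, hdm.2]
      have hkey : F n a g L w = F n a g L v + ((a * δ - 1 : ℕ) : ZMod n) := by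
        have hnat : a * (iv + δ - L) + (g - 1 - (tv + 1)) + a * L
            = a * iv + (g - 1 - tv) + (a * δ - 1) := by
          have e1 : a * (iv + δ - L) + a * L = a * (iv + δ) := by
            rw [← Nat.mul_add, Nat.sub_add_cancel hrow]
          have e2 : a * (iv + δ) = a * iv + a * δ := Nat.mul_add a iv δ
          omega
        calc F n a g L w = ((a * (iv + δ - L) + (g - 1 - (tv + 1)) : ℕ) : ZMod n) := hFw
          _ = ((a * (iv + δ - L) + (g - 1 - (tv + 1)) : ℕ) : ZMod n) + ((a * L : ℕ) : ZMod n) := by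
              rw [hauL, add_zero]
          _ = ((a * (iv + δ - L) + (g - 1 - (tv + 1)) + a * L : ℕ) : ZMod n) :=
              (Nat.cast_add _ _).symm
          _ = ((a * iv + (g - 1 - tv) + (a * δ - 1) : ℕ) : ZMod n) := by rw [hnat]
          _ = F n a g L v + ((a * δ - 1 : ℕ) : ZMod n) := by
              rw [Nat.cast_add, ← hFv]
      exact val_bounds _ _ (a * δ - 1) hkey (by omega) (by omega) hs1
  · -- Case C : cyclic wrap
    push_neg at hcyc
    have hWv : w.val = V + δ - n := by
      rw [hWval, Nat.mod_eq_sub_mod hcyc, Nat.mod_eq_of_lt (by omega)]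
    have htvg1 : tv = g - 1 := by
      by_contra hcon
      have h1 : tv + 2 ≤ g := by omega
      have h2 : L * (tv + 2) ≤ L * g := Nat.mul_le_mul le_rfl h1
      have h3 : L * (tv + 2) = L * tv + L + L := by ring
      have h4 : L * g = n := by rw [mul_comm]; exact hgL
      omega
    have h7 : L * tv + L = L * g := by
      have ht : tv + 1 = g := by omega
      rw [← ht]; ring
    have h4 : L * g = n := by rw [mul_comm]; exact hgL
    have hiv : L ≤ iv + δ := by omega
    have hVw : V + δ - n = iv + δ - L := by omega
    have hx : V + δ - n = L * 0 + (iv + δ - L) := by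
      rw [hVw, Nat.mul_zero, Nat.zero_add]
    have hdm := divmod_unique hL (show iv + δ - L < L by omega) hx
    have hFw : F n a g L w = ((a * (iv + δ - L) + (g - 1 - 0) : ℕ) : ZMod n) := by
      simp only [F, hWv, hdm.1, hdm.2]
    have hkey : F n a g L w = F n a g L v + ((a * δ + (g - 1) : ℕ) : ZMod n) := by
      have hnat : a * (iv + δ - L) + (g - 1 - 0) + a * L
          = a * iv + (g - 1 - tv) + (a * δ + (g - 1)) := by
        have e1 : a * (iv + δ - L) + a * L = a * (iv + δ) := by
          rw [← Nat.mul_add, Nat.sub_add_cancel hiv]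
        have e2 : a * (iv + δ) = a * iv + a * δ := Nat.mul_add a iv δ
        have e3 : g - 1 - tv = 0 := by omega
        omega
      calc F n a g L w = ((a * (iv + δ - L) + (g - 1 - 0) : ℕ) : ZMod n) := hFw
        _ = ((a * (iv + δ - L) + (g - 1 - 0) : ℕ) : ZMod n) + ((a * L : ℕ) : ZMod n) := by
            rw [hauL, add_zero]
        _ = ((a * (iv + δ - L) + (g - 1 - 0) + a * L : ℕ) : ZMod n) :=
            (Nat.cast_add _ _).symm
        _ = ((a * iv + (g - 1 - tv) + (a * δ + (g - 1)) : ℕ) : ZMod n) := by rw [hnat]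
        _ = F n a g L v + ((a * δ + (g - 1) : ℕ) : ZMod n) := by
            rw [Nat.cast_add, ← hFv]
    exact val_bounds _ _ (a * δ + (g - 1)) hkey (by omega) (by omega) hs1

end ClashAux

theorem stmt1 (n k s : ℕ) (hk : 1 ≤ k) (hkn : k < n)
    (hs : s = (n - 1) / k - 1) (hs1 : 1 ≤ s) :
    ∃ π : Equiv.Perm (ZMod n),
      ∀ i j : ZMod n, i ≠ j → circDist n i j < s →
        k ≤ circDist n (π i) (π j) := by
  classical
  have hn : 2 ≤ n := by omega
  haveI : NeZero n := ⟨by omega⟩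
  have hdm' := Nat.div_add_mod (n - 1) k
  have hmodk : (n - 1) % k < k := Nat.mod_lt _ (by omega)
  set a := (n - 1) / k with hadef
  clear_value a
  have hsa : s + 1 = a := by omega
  have hcomm : k * a = a * k := Nat.mul_comm k a
  have hak : a * k < n := by omega
  set g := Nat.gcd a n with hgdef
  have hga : g ∣ a := Nat.gcd_dvd_left a n
  have hgn : g ∣ n := Nat.gcd_dvd_right a n
  have hg : 0 < g := Nat.gcd_pos_of_pos_right a (by omega)
  set L := n / g with hLdef
  have hgL : g * L = n := Nat.mul_div_cancel' hgn
  have hcop : Nat.Coprime (a / g) (n / g) := Nat.coprime_div_gcd_div_gcd hg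
  clear_value g L
  have hgk : g ≤ n - a * k := by
    have hd1 : g ∣ n - a * k := Nat.dvd_sub hgn (hga.mul_right k)
    exact Nat.le_of_dvd (by omega) hd1
  have hkL : k < L := by
    by_contra hcon
    push_neg at hcon
    have h1 : g ≤ a := Nat.le_of_dvd (by omega) hga
    have h2 : g * L ≤ a * k := Nat.mul_le_mul h1 hcon
    omega
  have hL : 0 < L := by omega
  have hinj := ClashAux.F_inj (n := n) (a := a) (g := g) (L := L) hg hL hgL hga hcop
  have hbij : Function.Bijective (ClashAux.F n a g L) :=
    Finite.injective_iff_bijective.mp hinj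
  refine ⟨(Equiv.ofBijective _ hbij).symm, ?_⟩
  intro i j hij hlt
  set x := (Equiv.ofBijective _ hbij).symm i with hxdef
  set y := (Equiv.ofBijective _ hbij).symm j with hydef
  have hfx : ClashAux.F n a g L x = i := (Equiv.ofBijective _ hbij).apply_symm_apply i
  have hfy : ClashAux.F n a g L y = j := (Equiv.ofBijective _ hbij).apply_symm_apply j
  have hxy : x ≠ y := by
    intro hcon
    apply hij
    rw [← hfx, ← hfy, hcon]
  by_contra hcon
  push_neg at hcon
  have hcon' : min (x - y).val (y - x).val < k := hcon
  unfold circDist at hlt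
  rcases Nat.lt_or_ge ((y - x).val) k with h1 | h1
  · have hsp := ClashAux.spread hg hL hgL hga hsa hs1 hak hgk hkL x y hxy h1
    rw [hfx, hfy] at hsp
    omega
  · have h2 : (x - y).val < k := by omega
    have hsp := ClashAux.spread hg hL hgL hga hsa hs1 hak hgk hkL y x hxy.symm h2
    rw [hfx, hfy] at hsp
    omega
end

section
/- Let n, k and r be integers with 1 < r < k < n, and set s = ⌊(rn-1)/k⌋ - 1. Then k(s+1) + gcd(s+1, n) - 3 < rn - 1. -/
theorem stmt13 (n k r s : ℕ) (hr : 1 < r) (hrk : r < k) (hkn : k < n)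
    (hs : s = (r * n - 1) / k - 1) :
    k * (s + 1) + Nat.gcd (s + 1) n - 3 < r * n - 1 := by
  have hk0 : 0 < k := by omega
  set m := r * n - 1 with hm
  have h2n : 2 * n ≤ r * n := Nat.mul_le_mul_right n hr
  have hkm : k ≤ m := by omega
  set q := m / k with hq
  set ρ := m % k with hρ
  have hdm : k * q + ρ = m := Nat.div_add_mod m k
  have hρk : ρ < k := Nat.mod_lt m hk0
  have hq1 : 1 ≤ q := (Nat.one_le_div_iff hk0).mpr hkm
  have hs1 : s + 1 = q := by omega
  rw [hs1]
  set d := Nat.gcd q n with hd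
  have hdq : d ∣ q := Nat.gcd_dvd_left q n
  have hdn : d ∣ n := Nat.gcd_dvd_right q n
  have hrn : r * n = k * q + ρ + 1 := by omega
  have hdvd : d ∣ ρ + 1 := by
    have h1 : d ∣ r * n := hdn.mul_left r
    have h2 : d ∣ k * q := hdq.mul_left k
    have := Nat.dvd_sub h1 h2
    rw [hrn] at this; rwa [show k * q + ρ + 1 - k * q = ρ + 1 by omega] at this
  have hdle : d ≤ ρ + 1 := Nat.le_of_dvd (by omega) hdvd
  omega
end

section
/- Let r, s, k and n be positive integers with r < k < n and s + 1 < n, and let d = gcd(s+1, n) satisfy k(s+1) + d - 3 ≤ rn - 1. Then there exists a permutation π of Z_n that is (k,s,r)-clash-free, i.e., such that there is no subset X ⊆ Z_n of cardinality r+1 with ||X||_n < k and ||π(X)||_n < s. -/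
/-- `cyclNorm n X` is the minimum length of a cyclic interval of `ZMod n`
containing `X`: the least `t` such that `X ⊆ x + [0,t] (mod n)` for some `x`. -/
noncomputable def cyclNorm (n : ℕ) (X : Set (ZMod n)) : ℕ :=
  sInf {t : ℕ | ∃ x : ZMod n, ∀ y ∈ X, ∃ i : ℕ, i ≤ t ∧ y = x + (i : ZMod n)}

/-- A permutation `π` of `ZMod n` is `(s,k,r)`-clash-free if there is no
`(r+1)`-subset `X` with `‖X‖ < s` and `‖π(X)‖ < k`. -/
def IsClashFreeR (n s k r : ℕ) (π : Equiv.Perm (ZMod n)) : Prop :=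
  ¬ ∃ X : Finset (ZMod n), X.card = r + 1 ∧
      cyclNorm n (X : Set (ZMod n)) < s ∧
      cyclNorm n (⇑π '' (X : Set (ZMod n))) < k

/-- If the cyclic norm of `Y` is `< K`, then `Y` lies in an interval `x0 + [0, K-1]`. -/
lemma aux_interval {n K : ℕ} [NeZero n] {Y : Set (ZMod n)} (h : cyclNorm n Y < K) :
    ∃ x0 : ZMod n, ∀ y ∈ Y, ∃ i : ℕ, i ≤ K - 1 ∧ y = x0 + (i : ZMod n) := by
  have hne : {t : ℕ | ∃ x : ZMod n, ∀ y ∈ Y, ∃ i : ℕ, i ≤ t ∧ y = x + (i : ZMod n)}.Nonempty := by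
    refine ⟨n - 1, 0, fun y _ => ⟨y.val, ?_, ?_⟩⟩
    · have := ZMod.val_lt y; omega
    · rw [zero_add, ZMod.natCast_val, ZMod.cast_id]
  have hmem := Nat.sInf_mem hne
  obtain ⟨x0, hx0⟩ := hmem
  unfold cyclNorm at h
  refine ⟨x0, fun y hy => ?_⟩
  obtain ⟨i, hi, hyi⟩ := hx0 y hy
  exact ⟨i, by omega, hyi⟩

/-- Mod-reduction compatibility of the dither term. -/
lemma aux_emod (n d z : ℕ) (hn : 0 < n) (hd : 0 < d) :
    (z % n) * d / n = z * d / n % d := by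
  have hlt : (z % n) * d / n < d := by
    rw [Nat.div_lt_iff_lt_mul hn]
    nlinarith [Nat.mod_lt z hn]
  conv_rhs => rw [← Nat.mod_add_div z n]
  rw [show (z % n + n * (z / n)) * d = (z % n) * d + (z / n * d) * n from by ring,
    Nat.add_mul_div_right _ _ hn, Nat.add_mul_mod_self_right, Nat.mod_eq_of_lt hlt]

/-- The dither `E w = w*d/n % d` increases by at most 1. -/
lemma aux_estep (d n w : ℕ) (hdn : d ≤ n) (hn : 0 < n) :
    (w + 1) * d / n % d ≤ w * d / n % d + 1 := by
  have h1 : (w + 1) * d / n ≤ w * d / n + 1 := by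
    calc (w + 1) * d / n ≤ (w * d + n) / n := by
          apply Nat.div_le_div_right; nlinarith
      _ = w * d / n + 1 := by rw [Nat.add_div_right _ hn]
  have h2 : w * d / n ≤ (w + 1) * d / n := by
    apply Nat.div_le_div_right; nlinarith
  rcases (by omega : (w + 1) * d / n = w * d / n ∨ (w + 1) * d / n = w * d / n + 1) with h | h
  · rw [h]; omega
  · rw [h]
    calc (w * d / n + 1) % d = (w * d / n % d + 1 % d) % d := by rw [Nat.add_mod]
      _ ≤ w * d / n % d + 1 % d := Nat.mod_le _ _
      _ ≤ w * d / n % d + 1 := by have := Nat.mod_le 1 d; omega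

/-- Monotonicity of `G w = M*w - E w`. -/
lemma aux_gmono (d n M : ℕ) (hdn : d ≤ n) (hn : 0 < n) (hM : 1 ≤ M) {a b : ℕ} (hab : a ≤ b) :
    (M : ℤ) * a - ((a * d / n % d : ℕ) : ℤ) ≤ (M : ℤ) * b - ((b * d / n % d : ℕ) : ℤ) := by
  induction b, hab using Nat.le_induction with
  | base => exact le_refl _
  | succ b hab ih =>
      refine le_trans ih ?_
      have hE' : (((b + 1) * d / n % d : ℕ) : ℤ) ≤ ((b * d / n % d : ℕ) : ℤ) + 1 := by
        exact_mod_cast aux_estep d n b hdn hn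
      have hc1 : ((b + 1 : ℕ) : ℤ) = (b : ℤ) + 1 := by push_cast; ring
      have hM' : (1 : ℤ) ≤ (M : ℤ) := by exact_mod_cast hM
      rw [hc1]
      linarith [hE']

/-- Strict jump: one step of `G` gains at least `M - 1`. -/
lemma aux_gjump (d n M : ℕ) (hdn : d ≤ n) (hn : 0 < n) (hM : 1 ≤ M) {a b : ℕ} (hab : a < b) :
    (M : ℤ) * a - ((a * d / n % d : ℕ) : ℤ) + ((M : ℤ) - 1)
      ≤ (M : ℤ) * b - ((b * d / n % d : ℕ) : ℤ) := by
  have h1 : (M : ℤ) * a - ((a * d / n % d : ℕ) : ℤ) + ((M : ℤ) - 1)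
      ≤ (M : ℤ) * ((a + 1 : ℕ) : ℤ) - (((a + 1) * d / n % d : ℕ) : ℤ) := by
    have hE : (((a + 1) * d / n % d : ℕ) : ℤ) ≤ ((a * d / n % d : ℕ) : ℤ) + 1 := by
      exact_mod_cast aux_estep d n a hdn hn
    have hc1 : ((a + 1 : ℕ) : ℤ) = (a : ℤ) + 1 := by push_cast; ring
    rw [hc1]
    linarith [hE]
  exact le_trans h1 (aux_gmono d n M hdn hn hM (Nat.succ_le_of_lt hab))

/-- Abstract pigeonhole-in-an-interval counting lemma. -/
lemma aux_count (n r : ℕ) (hn : 0 < n) (Lb Ub : ℤ) (hUL : Ub ≤ Lb - 1 + (r : ℤ) * n)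
    (X : Finset (ZMod n)) (hcard : X.card = r + 1) (g : ZMod n → ℤ)
    (hbounds : ∀ x ∈ X, Lb ≤ (n : ℤ) * g x ∧ (n : ℤ) * g x ≤ Ub)
    (hinj : Set.InjOn g (X : Set (ZMod n))) : False := by
  have hnpos : (0 : ℤ) < n := by exact_mod_cast hn
  have hmaps : ∀ x ∈ X, g x ∈ Finset.Icc ((Lb - 1) / n + 1) (Ub / n) := by
    intro x hx
    obtain ⟨h1, h2⟩ := hbounds x hx
    rw [Finset.mem_Icc]
    constructor
    · have hlt : (Lb - 1) / n < g x := by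
        rw [Int.ediv_lt_iff_lt_mul hnpos, mul_comm]
        linarith
      omega
    · rw [Int.le_ediv_iff_mul_le hnpos, mul_comm]
      linarith
  have h1 : X.card ≤ (Finset.Icc ((Lb - 1) / n + 1) (Ub / n)).card :=
    Finset.card_le_card_of_injOn g hmaps hinj
  have h2 : (Finset.Icc ((Lb - 1) / n + 1) (Ub / n)).card ≤ r := by
    rw [Int.card_Icc, Int.toNat_le]
    have h3 : Ub / n ≤ (Lb - 1 + (r : ℤ) * n) / n := Int.ediv_le_ediv hnpos hUL
    rw [Int.add_mul_ediv_right _ _ (ne_of_gt hnpos)] at h3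
    linarith
  omega

set_option maxHeartbeats 1000000 in
theorem stmt18 (r s k n : ℕ) (hr : 0 < r) (hs : 0 < s) (hrk : r < k) (hkn : k < n)
    (hsn : s + 1 < n)
    (hbound : k * (s + 1) + Nat.gcd (s + 1) n - 3 ≤ r * n - 1) :
    ∃ π : Equiv.Perm (ZMod n), IsClashFreeR n k s r π := by
  haveI : NeZero n := ⟨by omega⟩
  set d := Nat.gcd (s + 1) n with hddef
  have hd0 : 0 < d := Nat.gcd_pos_of_pos_left _ (by omega)
  have hdn : d ≤ n := Nat.le_of_dvd (by omega) (Nat.gcd_dvd_right _ _)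
  have hdvm : d ∣ (s + 1) := Nat.gcd_dvd_left _ _
  have hdvn : d ∣ n := Nat.gcd_dvd_right _ _
  have hn0 : 0 < n := by omega
  -- the permutation
  set f : ZMod n → ZMod n :=
    fun x => ((s + 1 : ℕ) : ZMod n) * x - ((x.val * d / n : ℕ) : ZMod n) with hfdef
  have hfapp : ∀ x : ZMod n,
      f x = ((s + 1 : ℕ) : ZMod n) * x - ((x.val * d / n : ℕ) : ZMod n) := fun _ => rfl
  have hinj : Function.Injective f := by
    intro x y hxy
    rw [hfapp, hfapp] at hxy
    set z := x.val with hz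
    set z' := y.val with hz'
    have hzn : z < n := ZMod.val_lt x
    have hzn' : z' < n := ZMod.val_lt y
    have hx' : ((z : ℕ) : ZMod n) = x := by rw [hz, ZMod.natCast_val, ZMod.cast_id]
    have hy' : ((z' : ℕ) : ZMod n) = y := by rw [hz', ZMod.natCast_val, ZMod.cast_id]
    set e := z * d / n with he
    set e' := z' * d / n with he'
    have helt : e < d := by
      rw [he, Nat.div_lt_iff_lt_mul hn0]
      nlinarith
    have helt' : e' < d := by
      rw [he', Nat.div_lt_iff_lt_mul hn0]
      nlinarith
    have hzero : ((((s+1 : ℕ) : ℤ) * z - e - ((s+1 : ℕ) : ℤ) * z' + e' : ℤ) : ZMod n) = 0 := by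
      push_cast
      rw [hx', hy']
      push_cast at hxy
      linear_combination hxy
    have hdvd : (n : ℤ) ∣ (((s+1 : ℕ) : ℤ) * z - e - ((s+1 : ℕ) : ℤ) * z' + e') :=
      (ZMod.intCast_zmod_eq_zero_iff_dvd _ _).mp hzero
    -- step 1: e = e'
    have hd1 : (d : ℤ) ∣ ((e' : ℤ) - e) := by
      have hdm' : (d : ℤ) ∣ ((s+1 : ℕ) : ℤ) := Int.natCast_dvd_natCast.mpr hdvm
      have hdw : (d : ℤ) ∣ (((s+1 : ℕ) : ℤ) * z - e - ((s+1 : ℕ) : ℤ) * z' + e') :=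
        dvd_trans (Int.natCast_dvd_natCast.mpr hdvn) hdvd
      have hrw : (e' : ℤ) - e =
          (((s+1 : ℕ) : ℤ) * z - e - ((s+1 : ℕ) : ℤ) * z' + e')
            - ((s+1 : ℕ) : ℤ) * ((z : ℤ) - z') := by ring
      rw [hrw]
      exact dvd_sub hdw (hdm'.mul_right _)
    have hee : (e : ℤ) = e' := by
      obtain ⟨co, hco⟩ := hd1
      have hco1 : co < 1 := by
        have h2 : (d : ℤ) * co < (d : ℤ) * 1 := by
          rw [← hco, mul_one]
          have : (0 : ℤ) ≤ e := by positivity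
          have : (e' : ℤ) < d := by exact_mod_cast helt'
          omega
        exact lt_of_mul_lt_mul_left h2 (by positivity)
      have hco2 : -1 < co := by
        have h2 : (d : ℤ) * (-1) < (d : ℤ) * co := by
          rw [← hco]
          have : (0 : ℤ) ≤ e' := by positivity
          have : (e : ℤ) < d := by exact_mod_cast helt
          have hd0' : (0 : ℤ) < d := by exact_mod_cast hd0
          omega
        exact lt_of_mul_lt_mul_left h2 (by positivity)
      have : co = 0 := by omega
      rw [this, mul_zero] at hco
      omega
    -- step 2: n ∣ (s+1)(z - z')
    have hdvd2 : (n : ℤ) ∣ ((s+1 : ℕ) : ℤ) * ((z : ℤ) - z') := by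
      have h0 : (e' : ℤ) - e = 0 := by rw [hee]; ring
      have hrw : ((s+1 : ℕ) : ℤ) * ((z : ℤ) - z') =
          (((s+1 : ℕ) : ℤ) * z - e - ((s+1 : ℕ) : ℤ) * z' + e') - ((e' : ℤ) - e) := by ring
      rw [hrw, h0, sub_zero]
      exact hdvd
    -- step 3: cancel d
    set n' := n / d with hn'
    set m' := (s + 1) / d with hm'
    have hnn' : d * n' = n := Nat.mul_div_cancel' hdvn
    have hmm' : d * m' = s + 1 := Nat.mul_div_cancel' hdvm
    have hn'0 : 0 < n' := by
      rcases Nat.eq_zero_or_pos n' with h | h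
      · rw [h, mul_zero] at hnn'; omega
      · exact h
    have hdvd3 : (n' : ℤ) ∣ (m' : ℤ) * ((z : ℤ) - z') := by
      have : ((d : ℤ) * n') ∣ (d : ℤ) * ((m' : ℤ) * ((z : ℤ) - z')) := by
        rw [show (d : ℤ) * ((m' : ℤ) * ((z : ℤ) - z')) = ((d : ℤ) * m') * ((z : ℤ) - z') from
          by ring]
        have h1 : ((d * n' : ℕ) : ℤ) ∣ ((d * m' : ℕ) : ℤ) * ((z : ℤ) - z') := by
          rw [hnn', hmm']; exact hdvd2
        push_cast at h1
        exact h1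
      exact (mul_dvd_mul_iff_left (by positivity : (d : ℤ) ≠ 0)).mp this
    have hcop : Nat.Coprime n' m' := by
      have := Nat.coprime_div_gcd_div_gcd (m := s + 1) (n := n) hd0
      exact this.symm
    have hdvd4 : (n' : ℤ) ∣ ((z : ℤ) - z') := by
      have h5 : n' ∣ ((m' : ℤ) * ((z : ℤ) - z')).natAbs := by
        have h5x := Int.natAbs_dvd_natAbs.mpr hdvd3
        simpa using h5x
      have h6 : ((m' : ℤ) * ((z : ℤ) - z')).natAbs = m' * ((z : ℤ) - z').natAbs := by
        rw [Int.natAbs_mul, Int.natAbs_natCast]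
      rw [h6] at h5
      have h7 : n' ∣ ((z : ℤ) - z').natAbs := hcop.dvd_of_dvd_mul_left h5
      exact Int.dvd_natAbs.mp (Int.natCast_dvd_natCast.mpr h7)
    -- step 4: e = z / n', so z = z'
    have hezn : e = z / n' := by
      rw [he, ← hnn', mul_comm z d, Nat.mul_div_mul_left _ _ hd0]
    have hezn' : e' = z' / n' := by
      rw [he', ← hnn', mul_comm z' d, Nat.mul_div_mul_left _ _ hd0]
    have hmodeq : z % n' = z' % n' := by
      obtain ⟨w, hw⟩ := hdvd4
      have : (z : ℤ) % n' = (z' : ℤ) % n' := by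
        have : (z : ℤ) = z' + n' * w := by linarith [hw]
        rw [this, Int.add_mul_emod_self_left]
      exact_mod_cast this
    have hzz : z = z' := by
      have h8 := Nat.div_add_mod z n'
      have h9 := Nat.div_add_mod z' n'
      have h10 : z / n' = z' / n' := by
        have : (e : ℕ) = e' := by exact_mod_cast hee
        omega
      have h11 : n' * (z / n') = n' * (z' / n') := by rw [h10]
      omega
    rw [← hx', ← hy', hzz]
  have hbij : Function.Bijective f := Finite.injective_iff_bijective.mp hinj
  refine ⟨Equiv.ofBijective f hbij, ?_⟩
  rintro ⟨X, hcard, hX1, hX2⟩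
  have hcoe : ⇑(Equiv.ofBijective f hbij) = f := rfl
  rw [hcoe] at hX2
  obtain ⟨A, hA⟩ := aux_interval hX1
  obtain ⟨c, hc⟩ := aux_interval hX2
  have hAx : ∀ x ∈ X, ∃ i : ℕ, i ≤ k - 1 ∧ x = A + (i : ZMod n) :=
    fun x hx => hA x (Finset.mem_coe.mpr hx)
  have hcx : ∀ x ∈ X, ∃ t : ℕ, t ≤ s - 1 ∧ f x = c + (t : ZMod n) :=
    fun x hx => hc (f x) ⟨x, Finset.mem_coe.mpr hx, rfl⟩
  choose I hI hxI using hAx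
  choose T hT hfT using hcx
  -- notation
  set E : ℕ → ℕ := fun w => w * d / n % d with hE
  have hxz : ∀ (x : ZMod n) (hx : x ∈ X), x = ((A.val + I x hx : ℕ) : ZMod n) := by
    intro x hx
    have h1 : ((A.val + I x hx : ℕ) : ZMod n) = A + ((I x hx : ℕ) : ZMod n) := by
      push_cast
      rw [ZMod.natCast_val, ZMod.cast_id]
    rw [h1]
    exact hxI x hx
  have hfz : ∀ (x : ZMod n) (hx : x ∈ X),
      f x = (((s + 1) * (A.val + I x hx) : ℕ) : ZMod n) - ((E (A.val + I x hx) : ℕ) : ZMod n) := by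
    intro x hx
    have hval : x.val = (A.val + I x hx) % n := by
      conv_lhs => rw [hxz x hx]
      exact ZMod.val_natCast _ _
    rw [hfapp]
    rw [hval, aux_emod n d _ hn0 hd0]
    congr 1
    rw [Nat.cast_mul, ← hxz x hx]
  have hkey : ∀ (x : ZMod n) (hx : x ∈ X),
      (n : ℤ) ∣ (((s+1 : ℕ) : ℤ) * ((A.val + I x hx : ℕ) : ℤ)
        - ((E (A.val + I x hx) : ℕ) : ℤ) - ((c.val : ℕ) : ℤ) - ((T x hx : ℕ) : ℤ)) := by
    intro x hx
    rw [← ZMod.intCast_zmod_eq_zero_iff_dvd]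
    push_cast
    have h1 : f x = c + ((T x hx : ℕ) : ZMod n) := hfT x hx
    rw [hfz x hx] at h1
    have hcv : ((c.val : ℕ) : ZMod n) = c := by rw [ZMod.natCast_val, ZMod.cast_id]
    push_cast at h1
    rw [← hcv] at h1
    push_cast at h1
    linear_combination h1
  -- the quotient map
  classical
  set g : ZMod n → ℤ := fun x =>
    if hx : x ∈ X then
      (((s+1 : ℕ) : ℤ) * ((A.val + I x hx : ℕ) : ℤ)
        - ((E (A.val + I x hx) : ℕ) : ℤ) - ((c.val : ℕ) : ℤ) - ((T x hx : ℕ) : ℤ)) / n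
    else 0 with hg
  have hng : ∀ (x : ZMod n) (hx : x ∈ X),
      (n : ℤ) * g x = ((s+1 : ℕ) : ℤ) * ((A.val + I x hx : ℕ) : ℤ)
        - ((E (A.val + I x hx) : ℕ) : ℤ) - ((c.val : ℕ) : ℤ) - ((T x hx : ℕ) : ℤ) := by
    intro x hx
    have hgx : g x = (((s+1 : ℕ) : ℤ) * ((A.val + I x hx : ℕ) : ℤ)
        - ((E (A.val + I x hx) : ℕ) : ℤ) - ((c.val : ℕ) : ℤ) - ((T x hx : ℕ) : ℤ)) / n := by
      simp only [hg]
      rw [dif_pos hx]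
    rw [hgx]
    exact Int.mul_ediv_cancel' (hkey x hx)
  have hDbounds : ∀ x ∈ X,
      ((s+1 : ℕ) : ℤ) * (A.val : ℤ) - (d : ℤ) - (c.val : ℤ) - (s : ℤ) + 2 ≤ (n : ℤ) * g x ∧
      (n : ℤ) * g x ≤ ((s+1 : ℕ) : ℤ) * ((A.val : ℤ) + (k : ℤ) - 1) - (c.val : ℤ) := by
    intro x hx
    rw [hng x hx]
    have e1 : ((A.val + I x hx : ℕ) : ℤ) = (A.val : ℤ) + (I x hx : ℤ) := by push_cast; ring
    have hIle : ((s+1 : ℕ) : ℤ) * (I x hx : ℤ) ≤ ((s+1 : ℕ) : ℤ) * ((k : ℤ) - 1) := by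
      apply mul_le_mul_of_nonneg_left _ (by positivity)
      have := hI x hx
      have hk1 : 1 ≤ k := by omega
      omega
    have hI0 : (0 : ℤ) ≤ ((s+1 : ℕ) : ℤ) * (I x hx : ℤ) := by positivity
    have hEd : ((E (A.val + I x hx) : ℕ) : ℤ) ≤ (d : ℤ) - 1 := by
      have h5 : E (A.val + I x hx) < d := Nat.mod_lt _ hd0
      omega
    have hE0 : (0 : ℤ) ≤ ((E (A.val + I x hx) : ℕ) : ℤ) := by positivity
    have hTle : ((T x hx : ℕ) : ℤ) ≤ (s : ℤ) - 1 := by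
      have := hT x hx
      omega
    have hT0 : (0 : ℤ) ≤ ((T x hx : ℕ) : ℤ) := by positivity
    have e2 : ((s+1 : ℕ) : ℤ) * ((A.val : ℤ) + (I x hx : ℤ))
        = ((s+1 : ℕ) : ℤ) * (A.val : ℤ) + ((s+1 : ℕ) : ℤ) * (I x hx : ℤ) := by ring
    have e3 : ((s+1 : ℕ) : ℤ) * ((A.val : ℤ) + (k : ℤ) - 1)
        = ((s+1 : ℕ) : ℤ) * (A.val : ℤ) + ((s+1 : ℕ) : ℤ) * ((k : ℤ) - 1) := by ring
    rw [e1, e2, e3]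
    constructor
    · linarith
    · linarith
  -- injectivity of g on X
  have hginj : Set.InjOn g (X : Set (ZMod n)) := by
    have key2 : ∀ (z z' tz tz' : ℕ), tz ≤ s - 1 → z' < z →
        (((s+1 : ℕ) : ℤ) * z - ((E z : ℕ) : ℤ) - tz
          = ((s+1 : ℕ) : ℤ) * z' - ((E z' : ℕ) : ℤ) - tz') → False := by
      intro z z' tz tz' htz hlt heq
      have hj := aux_gjump d n (s+1) hdn hn0 (by omega) hlt
      have htz2 : (tz : ℤ) ≤ (s : ℤ) - 1 := by omega
      have htz0 : (0 : ℤ) ≤ (tz' : ℤ) := by positivity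
      have hE1 : ((z * d / n % d : ℕ) : ℤ) = ((E z : ℕ) : ℤ) := by rw [hE]
      have hE2 : ((z' * d / n % d : ℕ) : ℤ) = ((E z' : ℕ) : ℤ) := by rw [hE]
      rw [hE1, hE2] at hj
      have hsp : ((s + 1 : ℕ) : ℤ) = (s : ℤ) + 1 := by push_cast; ring
      rw [hsp] at hj heq
      linarith
    intro x hx x' hx' hgg
    have hx1 : x ∈ X := Finset.mem_coe.mp hx
    have hx1' : x' ∈ X := Finset.mem_coe.mp hx'
    have hDD : ((s+1 : ℕ) : ℤ) * ((A.val + I x hx1 : ℕ) : ℤ)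
        - ((E (A.val + I x hx1) : ℕ) : ℤ) - ((c.val : ℕ) : ℤ) - ((T x hx1 : ℕ) : ℤ)
        = ((s+1 : ℕ) : ℤ) * ((A.val + I x' hx1' : ℕ) : ℤ)
        - ((E (A.val + I x' hx1') : ℕ) : ℤ) - ((c.val : ℕ) : ℤ) - ((T x' hx1' : ℕ) : ℤ) := by
      rw [← hng x hx1, ← hng x' hx1', hgg]
    rcases Nat.lt_trichotomy (A.val + I x hx1) (A.val + I x' hx1') with h | h | h
    · exfalso
      refine key2 (A.val + I x' hx1') (A.val + I x hx1) (T x' hx1') (T x hx1)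
        (hT x' hx1') h ?_
      push_cast at hDD ⊢
      linarith
    · rw [hxz x hx1, hxz x' hx1', h]
    · exfalso
      refine key2 (A.val + I x hx1) (A.val + I x' hx1') (T x hx1) (T x' hx1')
        (hT x hx1) h ?_
      push_cast at hDD ⊢
      linarith
  -- conclude
  have h4 : 4 ≤ k * (s + 1) := Nat.mul_le_mul (by omega : 2 ≤ k) (by omega : 2 ≤ s + 1)
  have hrn1 : 1 ≤ r * n := Nat.one_le_iff_ne_zero.mpr (by positivity)
  have hb2 : k * (s + 1) + d ≤ r * n + 2 := by omega
  have hb3 : (k : ℤ) * ((s+1 : ℕ) : ℤ) + (d : ℤ) ≤ (r : ℤ) * (n : ℤ) + 2 := by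
    exact_mod_cast hb2
  have hUL : ((s+1 : ℕ) : ℤ) * ((A.val : ℤ) + (k : ℤ) - 1) - (c.val : ℤ)
      ≤ (((s+1 : ℕ) : ℤ) * (A.val : ℤ) - (d : ℤ) - (c.val : ℤ) - (s : ℤ) + 2) - 1
        + (r : ℤ) * n := by
    have e4 : ((s+1 : ℕ) : ℤ) * ((A.val : ℤ) + (k : ℤ) - 1)
        = ((s+1 : ℕ) : ℤ) * (A.val : ℤ) + (k : ℤ) * ((s+1 : ℕ) : ℤ) - ((s+1 : ℕ) : ℤ) := by
      ring
    have hsp : ((s + 1 : ℕ) : ℤ) = (s : ℤ) + 1 := by push_cast; ring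
    rw [e4, hsp]
    rw [hsp] at hb3
    linarith
  exact aux_count n r hn0 _ _ hUL X hcard g hDbounds hginj
end

section
/- Let n, s and k be positive integers with n ≥ 2 and k(s+1) ≤ n - 1, and let π be a permutation of Z_n with the property that for every i ∈ Z_n there is an integer δ_i ∈ {s, s+1, s+2} with π(i+1) ≡ π(i) + δ_i (mod n), and such that among any k-1 consecutive indices i, i+1, ..., i+k-2 at most one value δ equals s+2 and (number of δ's equal to s+2) − (number of δ's equal to s) ≤ 1. Then for all distinct i, j ∈ Z_n with ||i,j||_n < k, one has ||π(i),π(j)||_n ≥ s; that is, π is (k,s)-clash-free. -/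
theorem stmt19 (n s k : ℕ) (hn : 2 ≤ n) (hs : 0 < s) (hk : 0 < k)
    (hbound : k * (s + 1) ≤ n - 1)
    (π : Equiv.Perm (ZMod n)) (δ : ZMod n → ℕ)
    (hδ : ∀ i : ZMod n,
      (δ i = s ∨ δ i = s + 1 ∨ δ i = s + 2) ∧ π (i + 1) = π i + (δ i : ZMod n))
    (hcons : ∀ i : ZMod n,
      ((Finset.range (k - 1)).filter fun t : ℕ => δ (i + (t : ZMod n)) = s + 2).card ≤ 1 ∧
      ((Finset.range (k - 1)).filter fun t : ℕ => δ (i + (t : ZMod n)) = s + 2).card ≤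
        ((Finset.range (k - 1)).filter fun t : ℕ => δ (i + (t : ZMod n)) = s).card + 1) :
    ∀ i j : ZMod n, i ≠ j → circDist n i j < k → s ≤ circDist n (π i) (π j) := by
  haveI : NeZero n := ⟨by omega⟩
  have hstep : ∀ (i : ZMod n) (d : ℕ),
      π (i + (d : ZMod n)) = π i + ((∑ t ∈ Finset.range d, δ (i + (t : ZMod n)) : ℕ) : ZMod n) := by
    intro i d
    induction d with
    | zero => simp
    | succ d ih =>
      have h1 : (i + ((d + 1 : ℕ) : ZMod n)) = (i + (d : ZMod n)) + 1 := by
        push_cast; ring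
      rw [h1, (hδ (i + (d : ZMod n))).2, ih, Finset.sum_range_succ]
      push_cast; ring
  have key : ∀ (i : ZMod n) (d : ℕ), 0 < d → d < k →
      s ≤ circDist n (π i) (π (i + (d : ZMod n))) := by
    intro i d hd hdk
    set S := ∑ t ∈ Finset.range d, δ (i + (t : ZMod n)) with hSdef
    have hlb : d * s ≤ S := by
      have : ∑ t ∈ Finset.range d, s ≤ S :=
        Finset.sum_le_sum (fun t _ => by rcases (hδ (i + (t : ZMod n))).1 with h|h|h <;> omega)
      simpa [mul_comm] using this
    have hA : ((Finset.range d).filter fun t : ℕ => δ (i + (t : ZMod n)) = s + 2).card ≤ 1 := by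
      refine le_trans (Finset.card_le_card ?_) (hcons i).1
      exact Finset.filter_subset_filter _ (Finset.range_subset_range.mpr (by omega))
    have hub : S ≤ d * (s + 1) + 1 := by
      have h1 : S ≤ ∑ t ∈ Finset.range d,
          ((s + 1) + if δ (i + (t : ZMod n)) = s + 2 then 1 else 0) := by
        refine Finset.sum_le_sum fun t _ => ?_
        rcases (hδ (i + (t : ZMod n))).1 with h|h|h <;> simp [h]
      have h2 : ∑ t ∈ Finset.range d,
          ((s + 1) + if δ (i + (t : ZMod n)) = s + 2 then 1 else 0)
          = d * (s + 1) +
            ((Finset.range d).filter fun t : ℕ => δ (i + (t : ZMod n)) = s + 2).card := by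
        rw [Finset.sum_add_distrib, Finset.sum_boole]
        simp [mul_comm]
      omega
    -- arithmetic bounds
    have hmul : (d + 1) * (s + 1) ≤ k * (s + 1) := Nat.mul_le_mul_right _ (by omega)
    have hn1 : k * (s + 1) + 1 ≤ n := by omega
    have hSn : S + s + 1 ≤ n := by nlinarith
    have hsS : s ≤ S := le_trans (Nat.le_mul_of_pos_left s hd) hlb
    have hSlt : S < n := by omega
    have hval1 : ((S : ZMod n)).val = S := by
      rw [ZMod.val_natCast, Nat.mod_eq_of_lt hSlt]
    have hne : (S : ZMod n) ≠ 0 := by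
      intro h
      have := congrArg ZMod.val h
      rw [hval1, ZMod.val_zero] at this
      omega
    have hval2 : (-(S : ZMod n)).val = n - S := by
      rw [ZMod.neg_val, if_neg hne, hval1]
    have h1 : π (i + (d : ZMod n)) - π i = (S : ZMod n) := by rw [hstep]; ring
    have h2 : π i - π (i + (d : ZMod n)) = -(S : ZMod n) := by rw [hstep]; ring
    unfold circDist
    rw [h1, h2, hval1, hval2]
    omega
  intro i j hij hlt
  have hsymm : circDist n (π i) (π j) = circDist n (π j) (π i) := min_comm _ _
  unfold circDist at hlt
  rcases min_lt_iff.mp hlt with h | h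
  · -- (i - j).val < k
    have hd : i = j + (((i - j).val : ℕ) : ZMod n) := by
      rw [ZMod.natCast_val, ZMod.cast_id]; ring
    have hpos : 0 < (i - j).val := by
      rcases Nat.eq_zero_or_pos (i - j).val with h0 | h0
      · exact absurd (sub_eq_zero.mp ((ZMod.val_eq_zero _).mp h0)) hij
      · exact h0
    have hkey := key j (i - j).val hpos h
    rw [← hd] at hkey
    rw [hsymm]; exact hkey
  · -- (j - i).val < k
    have hd : j = i + (((j - i).val : ℕ) : ZMod n) := by
      rw [ZMod.natCast_val, ZMod.cast_id]; ring
    have hpos : 0 < (j - i).val := by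
      rcases Nat.eq_zero_or_pos (j - i).val with h0 | h0
      · exact absurd (sub_eq_zero.mp ((ZMod.val_eq_zero _).mp h0)) hij.symm
      · exact h0
    have hkey := key i (j - i).val hpos h
    rw [← hd] at hkey
    exact hkey
end
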